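/- The SupCon loss with the adjustment term bounds mutual information: under the batch sampling model described in the context, I(X;C) ≥ 1 + log N − I_NCE^{sup} − R^{sup}. (Corollary 1.) -/

import Mathlib

open MeasureTheory ProbabilityTheory Filter
open scoped Classical ENNReal Topology

/-- The Kullback–Leibler divergence `KL(P‖Q) = ∫ log (dP/dQ) dP`, with value `+∞`
when `P` is not absolutely continuous with respect to `Q` (or the integral is undefined). -/
noncomputable def klDivergence {Ω : Type*} [MeasurableSpace Ω] (P Q : Measure Ω) : EReal :=
  if P ≪ Q ∧ Integrable (fun ω => Real.log ((P.rnDeriv Q ω).toReal)) P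
  then ((∫ ω, Real.log ((P.rnDeriv Q ω).toReal) ∂P : ℝ) : EReal)
  else ⊤

/-- The mutual information `I(X;C) := KL(law(X,C) ‖ law(X) ⊗ law(C))`. -/
noncomputable def mutualInfo {Ω 𝓧 𝒞 : Type*} [MeasurableSpace Ω] [MeasurableSpace 𝓧]
    [MeasurableSpace 𝒞] (μ : Measure Ω) (X : Ω → 𝓧) (C : Ω → 𝒞) : EReal :=
  klDivergence (μ.map (fun ω => (X ω, C ω))) ((μ.map X).prod (μ.map C))

/-- The conditional law of `X` given `C = c`. -/
noncomputable def condLaw {Ω 𝓧 𝒞 : Type*} [MeasurableSpace Ω] [MeasurableSpace 𝓧]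
    [MeasurableSpace 𝒞] (μ : Measure Ω) (X : Ω → 𝓧) (C : Ω → 𝒞) (c : 𝒞) : Measure 𝓧 :=
  (μ[|C ⁻¹' {c}]).map X


/-- The law of a batch `((C₁,…,C_N), (X₁,…,X_N))`: `C₁,…,C_N` are i.i.d. copies of `C`, and
each `X_j` is drawn from the conditional law of `X` given `C = C_j`, conditionally
independently across `j`. -/
noncomputable def batchLaw {Ω 𝓧 𝒞 : Type*} [MeasurableSpace Ω] [MeasurableSpace 𝓧]
    [MeasurableSpace 𝒞] (μ : Measure Ω) (X : Ω → 𝓧) (C : Ω → 𝒞) (N : ℕ) :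
    Measure ((Fin N → 𝒞) × (Fin N → 𝓧)) :=
  (Measure.pi fun _ : Fin N => μ.map C).bind
    (fun cs => (Measure.pi fun j : Fin N => condLaw μ X C (cs j)).map (fun xs => (cs, xs)))

/-- The law of `(batch, X)` where, given the classes of the batch, `X` is drawn from the
conditional law of `X` given `C = C_i`, conditionally independently of the batch inputs. -/
noncomputable def PSup {Ω 𝓧 𝒞 : Type*} [MeasurableSpace Ω] [MeasurableSpace 𝓧]
    [MeasurableSpace 𝒞] (μ : Measure Ω) (X : Ω → 𝓧) (C : Ω → 𝒞) (N : ℕ) (i : Fin N) :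
    Measure (((Fin N → 𝒞) × (Fin N → 𝓧)) × 𝓧) :=
  (batchLaw μ X C N).bind (fun b => (condLaw μ X C (b.1 i)).map (fun x => (b, x)))

/-- The law of `(batch, X')` where `X'` is an independent draw from the marginal law of `X`,
independent of the batch. -/
noncomputable def QSup {Ω 𝓧 𝒞 : Type*} [MeasurableSpace Ω] [MeasurableSpace 𝓧]
    [MeasurableSpace 𝒞] (μ : Measure Ω) (X : Ω → 𝓧) (C : Ω → 𝒞) (N : ℕ) :
    Measure (((Fin N → 𝒞) × (Fin N → 𝓧)) × 𝓧) :=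
  (batchLaw μ X C N).prod (μ.map X)

/-- The class centroid `m_k := (1/|𝒫(k)|) Σ_{p ∈ 𝒫(k)} f(X_p)` where
`𝒫(k) = {p : C_p = C_k}`. -/
noncomputable def centroid {𝓧 𝒞 : Type*} [DecidableEq 𝒞] {dz N : ℕ}
    (f : 𝓧 → EuclideanSpace ℝ (Fin dz)) (cs : Fin N → 𝒞) (xs : Fin N → 𝓧) (k : Fin N) :
    EuclideanSpace ℝ (Fin dz) :=
  (((Finset.univ.filter (fun p => cs p = cs k)).card : ℝ))⁻¹ •
    ∑ p ∈ Finset.univ.filter (fun p => cs p = cs k), f (xs p)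

set_option maxHeartbeats 1600000

lemma nwj_aux {α : Type*} [MeasurableSpace α] (Q : Measure α) [IsFiniteMeasure Q]
    {w : α → ℝ≥0∞} (hw : Measurable w) {P : Measure α} [IsProbabilityMeasure P]
    (hP : P = Q.withDensity w) {g : α → ℝ} (hg : Measurable g) (hgpos : ∀ a, 0 < g a)
    (hgP : Integrable (fun a => Real.log (g a)) P) (hgQ : Integrable g Q)
    (hwP : Integrable (fun a => Real.log (w a).toReal) P) :
    ∫ a, Real.log (g a) ∂P + 1 - ∫ a, g a ∂Q ≤ ∫ a, Real.log (w a).toReal ∂P := by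
  have hac : P ≪ Q := hP ▸ withDensity_absolutelyContinuous Q w
  have hw0 : ∀ᵐ a ∂P, w a ≠ 0 := by
    rw [ae_iff]
    have hs : MeasurableSet {a | w a = 0} := hw (measurableSet_singleton 0)
    have : {a | ¬ w a ≠ 0} = {a | w a = 0} := by ext a; simp
    rw [this, hP, withDensity_apply _ hs]
    rw [setLIntegral_congr_fun hs (fun a ha => ha)]
    simp
  have hQtop : Q {a | w a = ∞} = 0 := by
    by_contra hne
    have hs : MeasurableSet {a | w a = ∞} := hw (measurableSet_singleton ∞)
    have hPtop : P {a | w a = ∞} = ∞ := by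
      rw [hP, withDensity_apply _ hs,
        setLIntegral_congr_fun hs (fun a ha => ha), setLIntegral_const,
        ENNReal.top_mul hne]
    exact measure_ne_top P _ hPtop
  have hwtop : ∀ᵐ a ∂P, w a ≠ ∞ := by
    have : P {a | w a = ∞} = 0 := hac hQtop
    rw [ae_iff]
    simpa using this
  set h : α → ℝ := fun a => Real.log (g a) - Real.log (w a).toReal + 1 with hh
  have hInt : Integrable h P := (hgP.sub hwP).add (integrable_const 1)
  have hintegral : ∫ a, h a ∂P
      = ∫ a, Real.log (g a) ∂P - ∫ a, Real.log (w a).toReal ∂P + 1 := by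
    have hsub : Integrable (fun a => Real.log (g a) - Real.log (w a).toReal) P := hgP.sub hwP
    rw [hh]
    rw [integral_add hsub (integrable_const 1), integral_sub hgP hwP]
    simp
  have key : ∫ a, h a ∂P ≤ ∫ a, g a ∂Q := by
    have hle1 : ∫ a, h a ∂P ≤ ∫ a, max (h a) 0 ∂P :=
      integral_mono hInt hInt.pos_part (fun a => le_max_left _ _)
    have hmeq : ∫ a, max (h a) 0 ∂P = (∫⁻ a, ENNReal.ofReal (max (h a) 0) ∂P).toReal :=
      integral_eq_lintegral_of_nonneg_ae (ae_of_all _ fun a => le_max_right _ _)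
        hInt.pos_part.aestronglyMeasurable
    have hptwise : ∀ᵐ a ∂P, ENNReal.ofReal (max (h a) 0) ≤ ENNReal.ofReal (g a) / w a := by
      filter_upwards [hw0, hwtop] with a h0 ht
      have hwr : 0 < (w a).toReal := ENNReal.toReal_pos h0 ht
      have h1 : h a ≤ g a / (w a).toReal := by
        have hlog : Real.log (g a / (w a).toReal) ≤ g a / (w a).toReal - 1 :=
          Real.log_le_sub_one_of_pos (div_pos (hgpos a) hwr)
        rw [Real.log_div (ne_of_gt (hgpos a)) (ne_of_gt hwr)] at hlog
        simp only [hh]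
        linarith
      have h2 : max (h a) 0 ≤ g a / (w a).toReal :=
        max_le h1 (le_of_lt (div_pos (hgpos a) hwr))
      calc ENNReal.ofReal (max (h a) 0) ≤ ENNReal.ofReal (g a / (w a).toReal) :=
            ENNReal.ofReal_le_ofReal h2
        _ = ENNReal.ofReal (g a) / ENNReal.ofReal (w a).toReal :=
            ENNReal.ofReal_div_of_pos hwr
        _ = ENNReal.ofReal (g a) / w a := by rw [ENNReal.ofReal_toReal ht]
    have hlint1 : ∫⁻ a, ENNReal.ofReal (max (h a) 0) ∂P
        ≤ ∫⁻ a, ENNReal.ofReal (g a) / w a ∂P := lintegral_mono_ae hptwise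
    have hlint2 : ∫⁻ a, ENNReal.ofReal (g a) / w a ∂P
        = ∫⁻ a, w a * (ENNReal.ofReal (g a) / w a) ∂Q := by
      rw [hP, lintegral_withDensity_eq_lintegral_mul Q hw (g := fun a => ENNReal.ofReal (g a) / w a)
        (by exact hg.ennreal_ofReal.div hw)]
      rfl
    have hlint3 : ∫⁻ a, w a * (ENNReal.ofReal (g a) / w a) ∂Q
        ≤ ∫⁻ a, ENNReal.ofReal (g a) ∂Q :=
      lintegral_mono fun a => ENNReal.mul_div_le
    have hgQfin : ∫⁻ a, ENNReal.ofReal (g a) ∂Q ≠ ∞ := by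
      refine ne_of_lt (lt_of_le_of_lt (lintegral_mono fun a => ?_) hgQ.hasFiniteIntegral)
      rw [← ofReal_norm]
      exact ENNReal.ofReal_le_ofReal (le_abs_self _)
    have hgQeq : ∫ a, g a ∂Q = (∫⁻ a, ENNReal.ofReal (g a) ∂Q).toReal :=
      integral_eq_lintegral_of_nonneg_ae (ae_of_all _ fun a => (hgpos a).le)
        hgQ.aestronglyMeasurable
    rw [hgQeq]
    refine hle1.trans (hmeq ▸ ENNReal.toReal_mono hgQfin ?_)
    exact hlint1.trans (hlint2 ▸ hlint3)
  linarith [key, hintegral]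

section
variable {Ω 𝓧 : Type*} [MeasurableSpace Ω] [MeasurableSpace 𝓧] {M : ℕ}
  (μ : Measure Ω) [IsProbabilityMeasure μ] (X : Ω → 𝓧) (C : Ω → Fin M)

lemma condLaw_prob (hX : Measurable X) {c : Fin M} (hc : μ (C ⁻¹' {c}) ≠ 0) :
    IsProbabilityMeasure (condLaw μ X C c) := by
  haveI := cond_isProbabilityMeasure (μ := μ) (s := C ⁻¹' {c}) hc
  exact Measure.isProbabilityMeasure_map hX.aemeasurable

lemma condLaw_ac (hX : Measurable X) (hC : Measurable C) (c : Fin M) :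
    condLaw μ X C c ≪ μ.map X := by
  refine Measure.AbsolutelyContinuous.mk (fun s hs h0 => ?_)
  rw [Measure.map_apply hX hs] at h0
  rw [condLaw, Measure.map_apply hX hs, cond_apply (hC (measurableSet_singleton c))]
  have : μ (C ⁻¹' {c} ∩ X ⁻¹' s) = 0 :=
    measure_mono_null Set.inter_subset_right h0
  rw [this, mul_zero]

lemma joint_decomp (hX : Measurable X) (hC : Measurable C)
    (hpos : ∀ c : Fin M, 0 < μ (C ⁻¹' {c})) :
    μ.map (fun ω => (X ω, C ω)) =
      ∑ c : Fin M, μ (C ⁻¹' {c}) • ((condLaw μ X C c).map (fun x => (x, c))) := by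
  ext s hs
  have hmkc : ∀ c : Fin M, Measurable (fun x : 𝓧 => (x, c)) :=
    fun c => measurable_id.prodMk measurable_const
  rw [Measure.map_apply (hX.prodMk hC) hs, Measure.finset_sum_apply]
  have hrhs : ∀ c : Fin M,
      (μ (C ⁻¹' {c}) • ((condLaw μ X C c).map (fun x => (x, c)))) s
        = μ (C ⁻¹' {c} ∩ X ⁻¹' ((fun x => (x, c)) ⁻¹' s)) := by
    intro c
    rw [Measure.smul_apply, Measure.map_apply (hmkc c) hs, condLaw,
      Measure.map_apply hX ((hmkc c) hs), cond_apply (hC (measurableSet_singleton c)),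
      smul_eq_mul, ← mul_assoc, ENNReal.mul_inv_cancel (hpos c).ne' (measure_ne_top μ _),
      one_mul]
  simp_rw [hrhs]
  have hdecomp : (fun ω => (X ω, C ω)) ⁻¹' s
      = ⋃ c : Fin M, (C ⁻¹' {c} ∩ X ⁻¹' ((fun x => (x, c)) ⁻¹' s)) := by
    ext ω
    simp only [Set.mem_preimage, Set.mem_iUnion, Set.mem_inter_iff, Set.mem_singleton_iff]
    constructor
    · intro h; exact ⟨C ω, rfl, h⟩
    · rintro ⟨c, hc, h⟩; rwa [hc]
  rw [hdecomp, measure_iUnion, tsum_fintype]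
  · intro c c' hne
    refine Set.disjoint_left.2 fun ω hω hω' => hne ?_
    rw [← hω.1, ← hω'.1]
  · intro c
    exact (hC (measurableSet_singleton c)).inter (hX ((hmkc c) hs))

lemma rho'_measurable (hX : Measurable X) (hC : Measurable C) :
    Measurable (fun z : 𝓧 × Fin M => ((condLaw μ X C z.2).rnDeriv (μ.map X)) z.1) := by
  apply measurable_from_prod_countable_left
  intro c
  exact Measure.measurable_rnDeriv (condLaw μ X C c) (μ.map X)

lemma joint_withDensity (hX : Measurable X) (hC : Measurable C)
    (hpos : ∀ c : Fin M, 0 < μ (C ⁻¹' {c})) :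
    ((μ.map X).prod (μ.map C)).withDensity
        (fun z : 𝓧 × Fin M => ((condLaw μ X C z.2).rnDeriv (μ.map X)) z.1)
      = μ.map (fun ω => (X ω, C ω)) := by
  set ν := μ.map X with hν
  set ρ' : 𝓧 × Fin M → ℝ≥0∞ := fun z => ((condLaw μ X C z.2).rnDeriv ν) z.1 with hρ'def
  have hρ' : Measurable ρ' := rho'_measurable μ X C hX hC
  haveI : IsProbabilityMeasure ν := Measure.isProbabilityMeasure_map hX.aemeasurable
  haveI : SigmaFinite ν := inferInstance
  ext s hs
  have hmkc : ∀ c : Fin M, Measurable (fun x : 𝓧 => (x, c)) :=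
    fun c => measurable_id.prodMk measurable_const
  rw [withDensity_apply _ hs, joint_decomp μ X C hX hC hpos, Measure.finset_sum_apply]
  rw [← lintegral_indicator hs, lintegral_prod _ (hρ'.indicator hs).aemeasurable]
  have hinner : ∀ x : 𝓧, ∫⁻ c, s.indicator ρ' (x, c) ∂(μ.map C)
      = ∑ c : Fin M, μ (C ⁻¹' {c}) * s.indicator ρ' (x, c) := by
    intro x
    conv_lhs => rw [← Measure.sum_smul_dirac (μ := μ.map C)]
    rw [lintegral_sum_measure, tsum_fintype]
    congr 1
    ext c
    rw [lintegral_smul_measure, lintegral_dirac,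
      Measure.map_apply hC (measurableSet_singleton c), smul_eq_mul]
  simp_rw [hinner]
  rw [lintegral_finset_sum _ (fun c _ => by
    exact ((hρ'.indicator hs).comp (hmkc c)).const_mul _)]
  refine Finset.sum_congr rfl fun c _ => ?_
  rw [Measure.smul_apply, Measure.map_apply (hmkc c) hs, smul_eq_mul]
  rw [lintegral_const_mul _ (by exact (hρ'.indicator hs).comp (hmkc c))]
  congr 1
  have hindic : ∀ x : 𝓧, s.indicator ρ' (x, c)
      = Set.indicator ((fun x : 𝓧 => (x, c)) ⁻¹' s) (fun x => ρ' (x, c)) x := by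
    intro x
    simp only [Set.indicator_apply, Set.mem_preimage]
  simp_rw [hindic]
  rw [lintegral_indicator ((hmkc c) hs)]
  haveI := condLaw_prob μ X C hX (hpos c).ne'
  have hwd : ν.withDensity ((condLaw μ X C c).rnDeriv ν) = condLaw μ X C c :=
    Measure.withDensity_rnDeriv_eq _ _ (condLaw_ac μ X C hX hC c)
  conv_rhs => rw [← hwd]
  rw [withDensity_apply _ ((hmkc c) hs)]
end

section
variable {Ω 𝓧 : Type*} [MeasurableSpace Ω] [MeasurableSpace 𝓧] {M : ℕ}
  (μ : Measure Ω) [IsProbabilityMeasure μ] (X : Ω → 𝓧) (C : Ω → Fin M)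

lemma kernel_meas (hX : Measurable X) (hC : Measurable C)
    (hpos : ∀ c : Fin M, 0 < μ (C ⁻¹' {c})) (N : ℕ) (i : Fin N) :
    Measurable (fun b : (Fin N → Fin M) × (Fin N → 𝓧) =>
      (condLaw μ X C (b.1 i)).map (fun x => (b, x))) := by
  apply Measure.measurable_of_measurable_coe
  intro s hs
  have hF : Measurable (fun q : ((Fin N → Fin M) × (Fin N → 𝓧)) × Fin M =>
      (condLaw μ X C q.2) (Prod.mk q.1 ⁻¹' s)) := by
    refine measurable_from_prod_countable_left (fun c => ?_)
    haveI := condLaw_prob μ X C hX (hpos c).ne'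
    have h0 : Measurable (fun b : (Fin N → Fin M) × (Fin N → 𝓧) =>
        (condLaw μ X C c) (Prod.mk b ⁻¹' s)) := measurable_measure_prodMk_left hs
    exact h0
  have hcomp : Measurable (fun b : (Fin N → Fin M) × (Fin N → 𝓧) => (b, b.1 i)) :=
    measurable_id.prodMk ((measurable_pi_apply i).comp measurable_fst)
  have heq : (fun b : (Fin N → Fin M) × (Fin N → 𝓧) =>
      ((condLaw μ X C (b.1 i)).map (fun x => (b, x))) s)
      = (fun b => (condLaw μ X C (b.1 i)) (Prod.mk b ⁻¹' s)) := by
    funext b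
    rw [Measure.map_apply measurable_prodMk_left hs]
  have h2 := hF.comp hcomp
  rw [heq]
  exact h2

lemma batchLaw_prob (hX : Measurable X) (hC : Measurable C)
    (hpos : ∀ c : Fin M, 0 < μ (C ⁻¹' {c})) (N : ℕ) :
    IsProbabilityMeasure (batchLaw μ X C N) := by
  haveI : IsProbabilityMeasure (μ.map C) := Measure.isProbabilityMeasure_map hC.aemeasurable
  constructor
  rw [batchLaw, Measure.bind_apply MeasurableSet.univ Measurable.of_discrete.aemeasurable]
  have h1 : ∀ cs : Fin N → Fin M,
      ((Measure.pi fun j : Fin N => condLaw μ X C (cs j)).map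
        (fun xs => (cs, xs))) Set.univ = 1 := by
    intro cs
    haveI : ∀ j : Fin N, IsProbabilityMeasure (condLaw μ X C (cs j)) :=
      fun j => condLaw_prob μ X C hX (hpos _).ne'
    haveI : IsProbabilityMeasure ((Measure.pi fun j : Fin N => condLaw μ X C (cs j)).map
        (fun xs => (cs, xs))) := Measure.isProbabilityMeasure_map measurable_prodMk_left.aemeasurable
    exact measure_univ
  simp_rw [h1]
  rw [lintegral_one, measure_univ]

lemma PSup_prob (hX : Measurable X) (hC : Measurable C)
    (hpos : ∀ c : Fin M, 0 < μ (C ⁻¹' {c})) (N : ℕ) (i : Fin N) :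
    IsProbabilityMeasure (PSup μ X C N i) := by
  haveI := batchLaw_prob μ X C hX hC hpos N
  constructor
  rw [PSup, Measure.bind_apply MeasurableSet.univ (kernel_meas μ X C hX hC hpos N i).aemeasurable]
  have h1 : ∀ b : (Fin N → Fin M) × (Fin N → 𝓧),
      ((condLaw μ X C (b.1 i)).map (fun x => (b, x))) Set.univ = 1 := by
    intro b
    haveI := condLaw_prob μ X C hX (hpos (b.1 i)).ne'
    haveI : IsProbabilityMeasure ((condLaw μ X C (b.1 i)).map (fun x => (b, x))) :=
      Measure.isProbabilityMeasure_map measurable_prodMk_left.aemeasurable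
    exact measure_univ
  simp_rw [h1]
  rw [lintegral_one, measure_univ]

lemma PSup_decomp (hX : Measurable X) (hC : Measurable C)
    (hpos : ∀ c : Fin M, 0 < μ (C ⁻¹' {c})) (N : ℕ) (i : Fin N) :
    PSup μ X C N i = ∑ c : Fin M,
      ((batchLaw μ X C N).restrict {b | b.1 i = c}).prod (condLaw μ X C c) := by
  haveI : ∀ c : Fin M, IsProbabilityMeasure (condLaw μ X C c) :=
    fun c => condLaw_prob μ X C hX (hpos c).ne'
  ext s hs
  rw [PSup, Measure.bind_apply hs (kernel_meas μ X C hX hC hpos N i).aemeasurable]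
  have hmap : ∀ b : (Fin N → Fin M) × (Fin N → 𝓧),
      ((condLaw μ X C (b.1 i)).map (fun x => (b, x))) s
        = condLaw μ X C (b.1 i) (Prod.mk b ⁻¹' s) :=
    fun b => Measure.map_apply measurable_prodMk_left hs
  simp_rw [hmap]
  have hAc : ∀ c : Fin M,
      MeasurableSet {b : (Fin N → Fin M) × (Fin N → 𝓧) | b.1 i = c} := fun c => by
    have h : Measurable (fun b : (Fin N → Fin M) × (Fin N → 𝓧) => b.1 i) :=
      (measurable_pi_apply i).comp measurable_fst
    exact h (measurableSet_singleton c)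
  have hpt : ∀ b : (Fin N → Fin M) × (Fin N → 𝓧),
      condLaw μ X C (b.1 i) (Prod.mk b ⁻¹' s)
      = ∑ c : Fin M, Set.indicator {b' : (Fin N → Fin M) × (Fin N → 𝓧) | b'.1 i = c}
          (fun b'' => condLaw μ X C c (Prod.mk b'' ⁻¹' s)) b := by
    intro b
    rw [Finset.sum_eq_single (b.1 i)]
    · simp [Set.indicator_apply]
    · intro c _ hne
      simp only [Set.indicator_apply, Set.mem_setOf_eq]
      rw [if_neg]
      intro h
      exact hne (h ▸ rfl)
    · intro h
      exact absurd (Finset.mem_univ _) h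
  simp_rw [hpt]
  rw [lintegral_finset_sum _ (fun c _ => Measurable.indicator
    (measurable_measure_prodMk_left hs) (hAc c))]
  rw [Measure.finset_sum_apply]
  refine Finset.sum_congr rfl fun c _ => ?_
  rw [lintegral_indicator (hAc c), Measure.prod_apply hs]

lemma batch_marginal (hX : Measurable X) (hC : Measurable C)
    (hpos : ∀ c : Fin M, 0 < μ (C ⁻¹' {c})) (N : ℕ) (i : Fin N) (c : Fin M) :
    batchLaw μ X C N {b | b.1 i = c} = μ (C ⁻¹' {c}) := by
  haveI : IsProbabilityMeasure (μ.map C) := Measure.isProbabilityMeasure_map hC.aemeasurable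
  have hAc : MeasurableSet {b : (Fin N → Fin M) × (Fin N → 𝓧) | b.1 i = c} := by
    have h : Measurable (fun b : (Fin N → Fin M) × (Fin N → 𝓧) => b.1 i) :=
      (measurable_pi_apply i).comp measurable_fst
    exact h (measurableSet_singleton c)
  rw [batchLaw, Measure.bind_apply hAc Measurable.of_discrete.aemeasurable]
  have h1 : ∀ cs : Fin N → Fin M,
      ((Measure.pi fun j : Fin N => condLaw μ X C (cs j)).map (fun xs => (cs, xs)))
        {b : (Fin N → Fin M) × (Fin N → 𝓧) | b.1 i = c}
      = Set.indicator {cs' : Fin N → Fin M | cs' i = c} (fun _ => 1) cs := by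
    intro cs
    haveI : ∀ j : Fin N, IsProbabilityMeasure (condLaw μ X C (cs j)) :=
      fun j => condLaw_prob μ X C hX (hpos _).ne'
    rw [Measure.map_apply measurable_prodMk_left hAc]
    by_cases h : cs i = c
    · have : (Prod.mk cs ⁻¹' {b : (Fin N → Fin M) × (Fin N → 𝓧) | b.1 i = c})
          = Set.univ := by
        ext xs; simp [h]
      rw [this]
      simp [Set.indicator_apply, h]
    · have : (Prod.mk cs ⁻¹' {b : (Fin N → Fin M) × (Fin N → 𝓧) | b.1 i = c})
          = (∅ : Set (Fin N → 𝓧)) := by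
        ext xs; simp [h]
      rw [this]
      simp [Set.indicator_apply, h]
  simp_rw [h1]
  rw [lintegral_indicator MeasurableSet.of_discrete, setLIntegral_const, one_mul]
  have hset : {cs' : Fin N → Fin M | cs' i = c}
      = Set.pi Set.univ (fun j => if j = i then {c} else Set.univ) := by
    ext cs
    simp only [Set.mem_setOf_eq, Set.mem_pi, Set.mem_univ, forall_true_left]
    constructor
    · intro h j
      by_cases hj : j = i
      · subst hj; simp [h]
      · simp [hj]
    · intro h
      have := h i
      simpa using this
  rw [hset, Measure.pi_pi]
  rw [Finset.prod_eq_single i (fun j _ hj => by simp [hj]) (fun h => absurd (Finset.mem_univ _) h)]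
  simp [Measure.map_apply hC (measurableSet_singleton c)]

lemma PSup_withDensity (hX : Measurable X) (hC : Measurable C)
    (hpos : ∀ c : Fin M, 0 < μ (C ⁻¹' {c})) (N : ℕ) (i : Fin N) :
    (QSup μ X C N).withDensity
        (fun z : ((Fin N → Fin M) × (Fin N → 𝓧)) × 𝓧 =>
          ((condLaw μ X C (z.1.1 i)).rnDeriv (μ.map X)) z.2)
      = PSup μ X C N i := by
  set ν := μ.map X with hν
  haveI : IsProbabilityMeasure ν := Measure.isProbabilityMeasure_map hX.aemeasurable
  set W : ((Fin N → Fin M) × (Fin N → 𝓧)) × 𝓧 → ℝ≥0∞ :=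
    fun z => ((condLaw μ X C (z.1.1 i)).rnDeriv ν) z.2 with hWdef
  have hW : Measurable W := by
    have h1 : Measurable (fun q : 𝓧 × Fin M => ((condLaw μ X C q.2).rnDeriv ν) q.1) :=
      rho'_measurable μ X C hX hC
    have h2 : Measurable (fun z : ((Fin N → Fin M) × (Fin N → 𝓧)) × 𝓧 =>
        (z.2, z.1.1 i)) :=
      measurable_snd.prodMk ((measurable_pi_apply i).comp (measurable_fst.comp measurable_fst))
    have h3 := h1.comp h2
    exact h3
  ext s hs
  rw [withDensity_apply _ hs, QSup, ← lintegral_indicator hs,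
    lintegral_prod _ (hW.indicator hs).aemeasurable,
    PSup, Measure.bind_apply hs (kernel_meas μ X C hX hC hpos N i).aemeasurable]
  refine lintegral_congr fun b => ?_
  have hind : ∀ x : 𝓧, s.indicator W (b, x)
      = Set.indicator (Prod.mk b ⁻¹' s)
          (fun x' => ((condLaw μ X C (b.1 i)).rnDeriv ν) x') x := by
    intro x
    simp only [Set.indicator_apply, Set.mem_preimage, hWdef]
  simp_rw [hind]
  haveI := condLaw_prob μ X C hX (hpos (b.1 i)).ne'
  rw [lintegral_indicator (measurable_prodMk_left hs),
    ← withDensity_apply _ (measurable_prodMk_left hs),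
    Measure.withDensity_rnDeriv_eq _ _ (condLaw_ac μ X C hX hC (b.1 i)),
    Measure.map_apply measurable_prodMk_left hs]

end

section
variable {Ω 𝓧 : Type*} [MeasurableSpace Ω] [MeasurableSpace 𝓧] {M : ℕ}
  (μ : Measure Ω) [IsProbabilityMeasure μ] (X : Ω → 𝓧) (C : Ω → Fin M)

lemma mi_decomp (hX : Measurable X) (hC : Measurable C)
    (hpos : ∀ c : Fin M, 0 < μ (C ⁻¹' {c}))
    (hInt : Integrable (fun z : 𝓧 × Fin M =>
      Real.log (((condLaw μ X C z.2).rnDeriv (μ.map X)) z.1).toReal)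
      (μ.map (fun ω => (X ω, C ω)))) :
    (∀ c : Fin M, Integrable (fun x : 𝓧 =>
        Real.log (((condLaw μ X C c).rnDeriv (μ.map X)) x).toReal) (condLaw μ X C c))
    ∧ ∫ z, Real.log (((condLaw μ X C z.2).rnDeriv (μ.map X)) z.1).toReal
        ∂(μ.map (fun ω => (X ω, C ω)))
      = ∑ c : Fin M, (μ (C ⁻¹' {c})).toReal *
          ∫ x, Real.log (((condLaw μ X C c).rnDeriv (μ.map X)) x).toReal
            ∂(condLaw μ X C c) := by
  have hjd := joint_decomp μ X C hX hC hpos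
  set φ : 𝓧 × Fin M → ℝ := fun z =>
    Real.log (((condLaw μ X C z.2).rnDeriv (μ.map X)) z.1).toReal with hφdef
  have hφm : Measurable φ :=
    Real.measurable_log.comp (rho'_measurable μ X C hX hC).ennreal_toReal
  have hmkc : ∀ c : Fin M, Measurable (fun x : 𝓧 => (x, c)) :=
    fun c => measurable_id.prodMk measurable_const
  have hIntSum : Integrable φ
      (∑ c : Fin M, μ (C ⁻¹' {c}) • ((condLaw μ X C c).map (fun x => (x, c)))) := by
    rw [← hjd]; exact hInt
  have hIntc : ∀ c : Fin M, Integrable φ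
      (μ (C ⁻¹' {c}) • ((condLaw μ X C c).map (fun x => (x, c)))) :=
    fun c => integrable_finset_sum_measure.mp hIntSum c (Finset.mem_univ c)
  have hIcm : ∀ c : Fin M, Integrable φ ((condLaw μ X C c).map (fun x => (x, c))) :=
    fun c => (integrable_smul_measure (hpos c).ne' (measure_ne_top μ _)).mp (hIntc c)
  have hIc : ∀ c : Fin M, Integrable (fun x : 𝓧 =>
      Real.log (((condLaw μ X C c).rnDeriv (μ.map X)) x).toReal) (condLaw μ X C c) := by
    intro c
    have h := (integrable_map_measure hφm.aestronglyMeasurable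
      (hmkc c).aemeasurable).mp (hIcm c)
    exact h
  refine ⟨hIc, ?_⟩
  rw [hjd, integrable_finset_sum_measure] at hInt
  rw [hjd, integral_finset_sum_measure hInt]
  refine Finset.sum_congr rfl fun c _ => ?_
  rw [integral_smul_measure, integral_map (hmkc c).aemeasurable hφm.aestronglyMeasurable,
    smul_eq_mul]

lemma psup_integral (hX : Measurable X) (hC : Measurable C)
    (hpos : ∀ c : Fin M, 0 < μ (C ⁻¹' {c})) (N : ℕ) (i : Fin N)
    (hIc : ∀ c : Fin M, Integrable (fun x : 𝓧 =>
        Real.log (((condLaw μ X C c).rnDeriv (μ.map X)) x).toReal) (condLaw μ X C c)) :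
    Integrable (fun z : ((Fin N → Fin M) × (Fin N → 𝓧)) × 𝓧 =>
        Real.log (((condLaw μ X C (z.1.1 i)).rnDeriv (μ.map X)) z.2).toReal)
      (PSup μ X C N i)
    ∧ ∫ z, Real.log (((condLaw μ X C (z.1.1 i)).rnDeriv (μ.map X)) z.2).toReal
        ∂(PSup μ X C N i)
      = ∑ c : Fin M, (μ (C ⁻¹' {c})).toReal *
          ∫ x, Real.log (((condLaw μ X C c).rnDeriv (μ.map X)) x).toReal
            ∂(condLaw μ X C c) := by
  haveI hB := batchLaw_prob μ X C hX hC hpos N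
  haveI : ∀ c : Fin M, IsProbabilityMeasure (condLaw μ X C c) :=
    fun c => condLaw_prob μ X C hX (hpos c).ne'
  set W : ((Fin N → Fin M) × (Fin N → 𝓧)) × 𝓧 → ℝ :=
    fun z => Real.log (((condLaw μ X C (z.1.1 i)).rnDeriv (μ.map X)) z.2).toReal with hWdef
  have hWm : Measurable W := by
    have h1 : Measurable (fun q : 𝓧 × Fin M =>
        Real.log (((condLaw μ X C q.2).rnDeriv (μ.map X)) q.1).toReal) :=
      Real.measurable_log.comp (rho'_measurable μ X C hX hC).ennreal_toReal
    have h2 : Measurable (fun z : ((Fin N → Fin M) × (Fin N → 𝓧)) × 𝓧 =>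
        (z.2, z.1.1 i)) :=
      measurable_snd.prodMk ((measurable_pi_apply i).comp (measurable_fst.comp measurable_fst))
    have h3 := h1.comp h2
    exact h3
  have hAc : ∀ c : Fin M,
      MeasurableSet {b : (Fin N → Fin M) × (Fin N → 𝓧) | b.1 i = c} := fun c => by
    have h : Measurable (fun b : (Fin N → Fin M) × (Fin N → 𝓧) => b.1 i) :=
      (measurable_pi_apply i).comp measurable_fst
    exact h (measurableSet_singleton c)
  set mc : Fin M → Measure (((Fin N → Fin M) × (Fin N → 𝓧)) × 𝓧) :=
    fun c => ((batchLaw μ X C N).restrict {b | b.1 i = c}).prod (condLaw μ X C c) with hmc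
  have hae : ∀ c : Fin M, ∀ᵐ z ∂(mc c), z.1 ∈ {b : (Fin N → Fin M) × (Fin N → 𝓧) | b.1 i = c} := by
    intro c
    rw [ae_iff]
    have hset : {z : ((Fin N → Fin M) × (Fin N → 𝓧)) × 𝓧 |
        ¬ z.1 ∈ {b : (Fin N → Fin M) × (Fin N → 𝓧) | b.1 i = c}}
        = {b : (Fin N → Fin M) × (Fin N → 𝓧) | b.1 i = c}ᶜ ×ˢ Set.univ := by
      ext z; simp [Set.mem_prod]
    rw [hset, hmc, Measure.prod_prod, Measure.restrict_apply (hAc c).compl,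
      Set.compl_inter_self, measure_empty, zero_mul]
  have haeq : ∀ c : Fin M, W =ᵐ[mc c]
      (fun z => Real.log (((condLaw μ X C c).rnDeriv (μ.map X)) z.2).toReal) := by
    intro c
    filter_upwards [hae c] with z hz
    have hz' : z.1.1 i = c := hz
    show Real.log (((condLaw μ X C (z.1.1 i)).rnDeriv (μ.map X)) z.2).toReal = _
    rw [hz']
  have hmarg : ∀ c : Fin M, (mc c).map Prod.snd
      = μ (C ⁻¹' {c}) • condLaw μ X C c := by
    intro c
    rw [hmc, Measure.map_snd_prod, Measure.restrict_apply_univ,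
      batch_marginal μ X C hX hC hpos N i c]
  have hIcomp : ∀ c : Fin M, Integrable
      (fun z : ((Fin N → Fin M) × (Fin N → 𝓧)) × 𝓧 =>
        Real.log (((condLaw μ X C c).rnDeriv (μ.map X)) z.2).toReal) (mc c) := by
    intro c
    have hg : AEStronglyMeasurable (fun x : 𝓧 =>
        Real.log (((condLaw μ X C c).rnDeriv (μ.map X)) x).toReal) ((mc c).map Prod.snd) :=
      (Real.measurable_log.comp
        (Measure.measurable_rnDeriv _ _).ennreal_toReal).aestronglyMeasurable
    have h1 : Integrable (fun x : 𝓧 =>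
        Real.log (((condLaw μ X C c).rnDeriv (μ.map X)) x).toReal) ((mc c).map Prod.snd) := by
      rw [hmarg c]
      exact (integrable_smul_measure (hpos c).ne' (measure_ne_top μ _)).mpr (hIc c)
    have h2 := (integrable_map_measure hg measurable_snd.aemeasurable).mp h1
    exact h2
  have hIW : ∀ c : Fin M, Integrable W (mc c) :=
    fun c => (hIcomp c).congr (haeq c).symm
  have hdec := PSup_decomp μ X C hX hC hpos N i
  constructor
  · rw [hdec]
    exact integrable_finset_sum_measure.mpr fun c _ => hIW c
  · rw [hdec, integral_finset_sum_measure (fun c _ => hIW c)]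
    refine Finset.sum_congr rfl fun c _ => ?_
    rw [integral_congr_ae (haeq c)]
    have hg : AEStronglyMeasurable (fun x : 𝓧 =>
        Real.log (((condLaw μ X C c).rnDeriv (μ.map X)) x).toReal) ((mc c).map Prod.snd) :=
      (Real.measurable_log.comp
        (Measure.measurable_rnDeriv _ _).ennreal_toReal).aestronglyMeasurable
    rw [← integral_map measurable_snd.aemeasurable hg, hmarg c, integral_smul_measure,
      smul_eq_mul]
end

/-- Corollary 1: the SupCon loss with the adjustment term bounds
mutual information: `I(X;C) ≥ 1 + log N − I_NCE^{sup} − R^{sup}`. -/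
theorem stmt_4 {Ω 𝓧 : Type*} [MeasurableSpace Ω] [MeasurableSpace 𝓧]
    {M dz : ℕ} (μ : Measure Ω) [IsProbabilityMeasure μ]
    (X : Ω → 𝓧) (C : Ω → Fin M) (hX : Measurable X) (hC : Measurable C)
    (hpos : ∀ c : Fin M, 0 < μ (C ⁻¹' {c}))
    (N : ℕ) (hN : 1 ≤ N)
    (f : 𝓧 → EuclideanSpace ℝ (Fin dz)) (hf : Measurable f)
    (ψ : EuclideanSpace ℝ (Fin dz) → EuclideanSpace ℝ (Fin dz) → ℝ)
    (hψ : Measurable (fun p : EuclideanSpace ℝ (Fin dz) × EuclideanSpace ℝ (Fin dz) =>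
      ψ p.1 p.2))
    (hintP : ∀ i : Fin N, Integrable (fun z : ((Fin N → Fin M) × (Fin N → 𝓧)) × 𝓧 =>
      -Real.log (Real.exp (ψ (f z.2) (centroid f z.1.1 z.1.2 i)) /
        ∑ j : Fin N, Real.exp (ψ (f z.2) (f (z.1.2 j))))) (PSup μ X C N i))
    (hintQ : Integrable (fun z : ((Fin N → Fin M) × (Fin N → 𝓧)) × 𝓧 =>
      (∑ k : Fin N, Real.exp (ψ (f z.2) (centroid f z.1.1 z.1.2 k))) /
        ∑ k : Fin N, Real.exp (ψ (f z.2) (f (z.1.2 k)))) (QSup μ X C N)) :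
    ((1 + Real.log N
        - (1 / N) * ∑ i : Fin N, ∫ z,
            -Real.log (Real.exp (ψ (f z.2) (centroid f z.1.1 z.1.2 i)) /
              ∑ j : Fin N, Real.exp (ψ (f z.2) (f (z.1.2 j)))) ∂(PSup μ X C N i)
        - ∫ z, (∑ k : Fin N, Real.exp (ψ (f z.2) (centroid f z.1.1 z.1.2 k))) /
            (∑ k : Fin N, Real.exp (ψ (f z.2) (f (z.1.2 k)))) ∂(QSup μ X C N) : ℝ) : EReal)
      ≤ mutualInfo μ X C := by
  haveI hνP : IsProbabilityMeasure (μ.map X) := Measure.isProbabilityMeasure_map hX.aemeasurable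
  haveI hlCP : IsProbabilityMeasure (μ.map C) := Measure.isProbabilityMeasure_map hC.aemeasurable
  haveI hBP := batchLaw_prob μ X C hX hC hpos N
  haveI hQP : IsProbabilityMeasure (QSup μ X C N) := by
    rw [QSup]; infer_instance
  haveI : Nonempty (Fin N) := ⟨⟨0, Nat.lt_of_lt_of_le Nat.zero_lt_one hN⟩⟩
  have hNpos : (0:ℝ) < (N:ℝ) := by
    exact_mod_cast Nat.lt_of_lt_of_le Nat.zero_lt_one hN
  rw [mutualInfo, klDivergence]
  split_ifs with h
  swap
  · exact le_top
  obtain ⟨hAC, hIntKL⟩ := h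
  rw [EReal.coe_le_coe_iff]
  -- identification of the Radon-Nikodym derivative of the joint law
  have hwd := joint_withDensity μ X C hX hC hpos
  have hrnae : (μ.map (fun ω => (X ω, C ω))).rnDeriv ((μ.map X).prod (μ.map C))
      =ᵐ[(μ.map X).prod (μ.map C)]
      (fun z : 𝓧 × Fin M => ((condLaw μ X C z.2).rnDeriv (μ.map X)) z.1) := by
    conv_lhs => rw [← hwd]
    exact Measure.rnDeriv_withDensity _ (rho'_measurable μ X C hX hC)
  have hrnaeJ := hAC.ae_eq hrnae
  have hlogae : (fun z : 𝓧 × Fin M =>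
      Real.log (((μ.map (fun ω => (X ω, C ω))).rnDeriv ((μ.map X).prod (μ.map C)) z).toReal))
      =ᵐ[μ.map (fun ω => (X ω, C ω))]
      (fun z : 𝓧 × Fin M =>
        Real.log (((condLaw μ X C z.2).rnDeriv (μ.map X)) z.1).toReal) := by
    filter_upwards [hrnaeJ] with z hz
    rw [hz]
  have hIntρ : Integrable (fun z : 𝓧 × Fin M =>
      Real.log (((condLaw μ X C z.2).rnDeriv (μ.map X)) z.1).toReal)
      (μ.map (fun ω => (X ω, C ω))) := hIntKL.congr hlogae
  obtain ⟨hIc, hMIC⟩ := mi_decomp μ X C hX hC hpos hIntρ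
  set S : ℝ := ∑ c : Fin M, (μ (C ⁻¹' {c})).toReal *
      ∫ x, Real.log (((condLaw μ X C c).rnDeriv (μ.map X)) x).toReal
        ∂(condLaw μ X C c) with hSdef
  have hVal : ∫ z, Real.log
        (((μ.map fun ω => (X ω, C ω)).rnDeriv ((μ.map X).prod (μ.map C)) z).toReal)
        ∂(μ.map fun ω => (X ω, C ω)) = S :=
    (integral_congr_ae hlogae).trans hMIC
  rw [hVal]
  -- notation for the batch quantities
  set den : ((Fin N → Fin M) × (Fin N → 𝓧)) × 𝓧 → ℝ :=
    fun z => ∑ j : Fin N, Real.exp (ψ (f z.2) (f (z.1.2 j))) with hdendef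
  set num : Fin N → ((Fin N → Fin M) × (Fin N → 𝓧)) × 𝓧 → ℝ :=
    fun k z => Real.exp (ψ (f z.2) (centroid f z.1.1 z.1.2 k)) with hnumdef
  set ratio : Fin N → ((Fin N → Fin M) × (Fin N → 𝓧)) × 𝓧 → ℝ :=
    fun k z => num k z / den z with hratiodef
  have hdenpos : ∀ z, 0 < den z :=
    fun z => Finset.sum_pos (fun j _ => Real.exp_pos _) Finset.univ_nonempty
  have hratiopos : ∀ k z, 0 < ratio k z :=
    fun k z => div_pos (Real.exp_pos _) (hdenpos z)
  have hdenm : Measurable den := by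
    refine Finset.measurable_sum _ (fun j _ => ?_)
    exact Real.measurable_exp.comp (hψ.comp ((hf.comp measurable_snd).prodMk
      (hf.comp ((measurable_pi_apply j).comp (measurable_snd.comp measurable_fst)))))
  have hnumm : ∀ k : Fin N, Measurable (num k) := by
    intro k
    have hmain : Measurable (fun q : ((Fin N → 𝓧) × 𝓧) × (Fin N → Fin M) =>
        ψ (f q.1.2) (centroid f q.2 q.1.1 k)) := by
      refine measurable_from_prod_countable_left (fun cs => ?_)
      have hc : Measurable (fun p : (Fin N → 𝓧) × 𝓧 => centroid f cs p.1 k) := by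
        simp only [centroid]
        refine Measurable.fun_const_smul ?_ _
        refine Finset.measurable_sum _ (fun p _ => ?_)
        exact hf.comp ((measurable_pi_apply p).comp measurable_fst)
      have h := hψ.comp ((hf.comp measurable_snd).prodMk hc)
      exact h
    have h2 : Measurable (fun z : ((Fin N → Fin M) × (Fin N → 𝓧)) × 𝓧 =>
        ((z.1.2, z.2), z.1.1)) :=
      ((measurable_snd.comp measurable_fst).prodMk measurable_snd).prodMk
        (measurable_fst.comp measurable_fst)
    have h3 := hmain.comp h2
    exact Real.measurable_exp.comp h3
  -- integrability over QSup
  have husum : Integrable (fun z => ∑ k : Fin N, ratio k z) (QSup μ X C N) := by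
    have heq : (fun z : ((Fin N → Fin M) × (Fin N → 𝓧)) × 𝓧 =>
        (∑ k : Fin N, num k z) / den z) = fun z => ∑ k : Fin N, ratio k z := by
      funext z
      rw [Finset.sum_div]
    rw [← heq]
    exact hintQ
  have hratio_int : ∀ k : Fin N, Integrable (ratio k) (QSup μ X C N) := by
    intro k
    refine husum.mono' ((hnumm k).div hdenm).aestronglyMeasurable ?_
    refine ae_of_all _ (fun z => ?_)
    rw [Real.norm_eq_abs, abs_of_pos (hratiopos k z)]
    exact Finset.single_le_sum (fun j _ => (hratiopos j z).le) (Finset.mem_univ k)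
  have hTsum : ∫ z, (∑ k : Fin N, num k z) / den z ∂(QSup μ X C N)
      = ∑ k : Fin N, ∫ z, ratio k z ∂(QSup μ X C N) := by
    have heq : (fun z : ((Fin N → Fin M) × (Fin N → 𝓧)) × 𝓧 =>
        (∑ k : Fin N, num k z) / den z) = fun z => ∑ k : Fin N, ratio k z := by
      funext z
      rw [Finset.sum_div]
    rw [heq]
    exact integral_finset_sum _ (fun k _ => hratio_int k)
  -- the key inequality for each i
  have hkey : ∀ i : Fin N,
      Real.log N + ∫ z, Real.log (ratio i z) ∂(PSup μ X C N i) + 1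
        - (N:ℝ) * ∫ z, ratio i z ∂(QSup μ X C N) ≤ S := by
    intro i
    haveI := PSup_prob μ X C hX hC hpos N i
    obtain ⟨hIW, hValW⟩ := psup_integral μ X C hX hC hpos N i hIc
    have hlr : Integrable (fun z => Real.log (ratio i z)) (PSup μ X C N i) := by
      have h0 := (hintP i).neg
      refine h0.congr (ae_of_all _ (fun z => ?_))
      simp only [Pi.neg_apply, neg_neg, hratiodef, hnumdef, hdendef]
    have hglog : ∀ z, Real.log ((N:ℝ) * ratio i z)
        = Real.log N + Real.log (ratio i z) :=
      fun z => Real.log_mul (ne_of_gt hNpos) (ne_of_gt (hratiopos i z))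
    have hgP : Integrable (fun z => Real.log ((N:ℝ) * ratio i z)) (PSup μ X C N i) := by
      simp only [hglog]
      exact (integrable_const _).add hlr
    have hgQ : Integrable (fun z => (N:ℝ) * ratio i z) (QSup μ X C N) :=
      (hratio_int i).const_mul _
    have hWm : Measurable (fun z : ((Fin N → Fin M) × (Fin N → 𝓧)) × 𝓧 =>
        ((condLaw μ X C (z.1.1 i)).rnDeriv (μ.map X)) z.2) := by
      have h1 : Measurable (fun q : 𝓧 × Fin M =>
          ((condLaw μ X C q.2).rnDeriv (μ.map X)) q.1) := rho'_measurable μ X C hX hC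
      have h2 : Measurable (fun z : ((Fin N → Fin M) × (Fin N → 𝓧)) × 𝓧 =>
          (z.2, z.1.1 i)) :=
        measurable_snd.prodMk
          ((measurable_pi_apply i).comp (measurable_fst.comp measurable_fst))
      have h3 := h1.comp h2
      exact h3
    have hnwj := nwj_aux (QSup μ X C N) hWm (g := fun z => (N:ℝ) * ratio i z)
      (PSup_withDensity μ X C hX hC hpos N i).symm
      (measurable_const.mul ((hnumm i).div hdenm))
      (fun z => mul_pos hNpos (hratiopos i z)) hgP hgQ hIW
    rw [hValW] at hnwj
    have h1 : ∫ z, Real.log ((N:ℝ) * ratio i z) ∂(PSup μ X C N i)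
        = Real.log N + ∫ z, Real.log (ratio i z) ∂(PSup μ X C N i) := by
      simp only [hglog]
      rw [integral_add (integrable_const _) hlr, integral_const, probReal_univ]
      simp
    have h2 : ∫ z, (N:ℝ) * ratio i z ∂(QSup μ X C N)
        = (N:ℝ) * ∫ z, ratio i z ∂(QSup μ X C N) := integral_const_mul _ _
    rw [h1, h2] at hnwj
    linarith [hnwj]
  -- sum the key inequalities over i and conclude
  have hIi : ∀ i : Fin N, ∫ z, -Real.log (ratio i z) ∂(PSup μ X C N i)
      = - ∫ z, Real.log (ratio i z) ∂(PSup μ X C N i) := fun i => integral_neg _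
  have hsum : ∑ i : Fin N, (Real.log N + ∫ z, Real.log (ratio i z) ∂(PSup μ X C N i) + 1
      - (N:ℝ) * ∫ z, ratio i z ∂(QSup μ X C N)) ≤ (N:ℝ) * S := by
    calc ∑ i : Fin N, (Real.log N + ∫ z, Real.log (ratio i z) ∂(PSup μ X C N i) + 1
        - (N:ℝ) * ∫ z, ratio i z ∂(QSup μ X C N))
        ≤ ∑ _i : Fin N, S := Finset.sum_le_sum (fun i _ => hkey i)
      _ = (N:ℝ) * S := by
        rw [Finset.sum_const, Finset.card_univ, Fintype.card_fin, nsmul_eq_mul]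
  have hexp : ∑ i : Fin N, (Real.log N + ∫ z, Real.log (ratio i z) ∂(PSup μ X C N i) + 1
      - (N:ℝ) * ∫ z, ratio i z ∂(QSup μ X C N))
      = (N:ℝ) * Real.log N + (∑ i : Fin N, ∫ z, Real.log (ratio i z) ∂(PSup μ X C N i))
        + (N:ℝ) - (N:ℝ) * ∑ i : Fin N, ∫ z, ratio i z ∂(QSup μ X C N) := by
    rw [Finset.sum_sub_distrib, Finset.sum_add_distrib, Finset.sum_add_distrib,
      Finset.sum_const, Finset.sum_const, ← Finset.mul_sum, Finset.card_univ,
      Fintype.card_fin, nsmul_eq_mul, nsmul_eq_mul, mul_one]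
  rw [hexp] at hsum
  -- rewrite the goal in terms of these quantities
  show 1 + Real.log N
      - 1 / (N:ℝ) * ∑ i : Fin N, ∫ z, -Real.log (ratio i z) ∂(PSup μ X C N i)
      - ∫ z, (∑ k : Fin N, num k z) / den z ∂(QSup μ X C N) ≤ S
  rw [hTsum]
  simp only [hIi]
  rw [Finset.sum_neg_distrib]
  set A : ℝ := ∑ i : Fin N, ∫ z, Real.log (ratio i z) ∂(PSup μ X C N i) with hA
  set T : ℝ := ∑ i : Fin N, ∫ z, ratio i z ∂(QSup μ X C N) with hT
  -- goal : 1 + Real.log N - 1/N * -A - T ≤ S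
  have hgoal : (N:ℝ) * (1 + Real.log (N:ℝ) - 1 / (N:ℝ) * -A - T)
      = (N:ℝ) * Real.log N + A + (N:ℝ) - (N:ℝ) * T := by
    field_simp
    ring
  have hfin : (N:ℝ) * (1 + Real.log (N:ℝ) - 1 / (N:ℝ) * -A - T) ≤ (N:ℝ) * S := by
    rw [hgoal]
    exact hsum
  exact le_of_mul_le_mul_left hfin hNpos
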